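/- Let $(\mu_{n,j})$ be a real array with $\mu_{0,0}=1$ and for $n\ge1$: $1\le\mu_{n,n}<2$, $\mu_{n,n-1}=1-\mu_{n,n}$, $\mu_{n,j}=0$ for $j<n-1$. For each $n$, set $\zeta_{k,n}=0$ if $k\le n$ and $\zeta_{k,n}=\sum_{j=n+1}^k(\mu_{j,j}-2)$ if $k>n$, and suppose $\chi_n=\sum_{k\ge n}\exp(\zeta_{k,n})<+\infty$. Let $(\xi_n)$ be a sequence in $[0,+\infty[$ and $(\varepsilon_n)$ a sequence in $[0,+\infty[$ with $\sum_{n}\chi_n\varepsilon_n<+\infty$ and $\xi_{n+1}\le\sum_{j=0}^n\mu_{n,j}\xi_j+\varepsilon_n$ for all $n$. Then $(\xi_n)$ converges. -/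

import Mathlib

open Finset Filter

theorem inertial_recursion_converges
    (μ : ℕ → ℕ → ℝ)
    (h00 : μ 0 0 = 1)
    (hdiag : ∀ n : ℕ, 1 ≤ n → 1 ≤ μ n n ∧ μ n n < 2)
    (hsub : ∀ n : ℕ, 1 ≤ n → μ n (n - 1) = 1 - μ n n)
    (hzero : ∀ n j : ℕ, 1 ≤ n → j < n - 1 → μ n j = 0)
    (ζ : ℕ → ℕ → ℝ)
    (hζ : ∀ k n : ℕ, ζ k n = if k ≤ n then 0 else ∑ j ∈ Icc (n + 1) k, (μ j j - 2))
    (χ : ℕ → ℝ)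
    (hχsum : ∀ n : ℕ, Summable (fun k : ℕ => Real.exp (ζ (n + k) n)))
    (hχ : ∀ n : ℕ, χ n = ∑' k : ℕ, Real.exp (ζ (n + k) n))
    (ξ ε : ℕ → ℝ)
    (hξ : ∀ n, 0 ≤ ξ n) (hε : ∀ n, 0 ≤ ε n)
    (hχε : Summable (fun n => χ n * ε n))
    (hrec : ∀ n : ℕ, ξ (n + 1) ≤ (∑ j ∈ range (n + 1), μ n j * ξ j) + ε n) :
    ∃ l : ℝ, Tendsto ξ atTop (nhds l) := by
  set α : ℕ → ℝ := fun n => μ n n - 1 with hα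
  set δ : ℕ → ℝ := fun n => max (ξ (n + 1) - ξ n) 0 with hδdef
  have hδ0 : ∀ n, 0 ≤ δ n := fun n => le_max_right _ _
  have hδξ : ∀ n, ξ (n + 1) - ξ n ≤ δ n := fun n => le_max_left _ _
  have hα0 : ∀ n, 1 ≤ n → 0 ≤ α n := by
    intro n hn
    have := (hdiag n hn).1
    simp only [hα]; linarith
  -- base case
  have hbase : δ 0 ≤ ε 0 := by
    have h := hrec 0
    rw [Finset.sum_range_one, h00, one_mul] at h
    exact max_le (by linarith) (hε 0)
  -- step
  have hstep : ∀ m : ℕ, δ (m + 1) ≤ α (m + 1) * δ m + ε (m + 1) := by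
    intro m
    have h := hrec (m + 1)
    rw [Finset.sum_range_succ, Finset.sum_range_succ] at h
    have hz : ∑ j ∈ range m, μ (m + 1) j * ξ j = 0 := by
      apply Finset.sum_eq_zero
      intro j hj
      rw [hzero (m + 1) j (by omega) (by simpa using Finset.mem_range.mp hj), zero_mul]
    have hs : μ (m + 1) m = 1 - μ (m + 1) (m + 1) := by
      have := hsub (m + 1) (by omega)
      simpa using this
    rw [hz, hs] at h
    have key : ξ (m + 2) - ξ (m + 1) ≤ α (m + 1) * (ξ (m + 1) - ξ m) + ε (m + 1) := by
      simp only [hα]; ring_nf; ring_nf at h; linarith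
    have hαnn := hα0 (m + 1) (by omega)
    have : ξ (m + 2) - ξ (m + 1) ≤ α (m + 1) * δ m + ε (m + 1) := by
      calc ξ (m + 2) - ξ (m + 1) ≤ α (m + 1) * (ξ (m + 1) - ξ m) + ε (m + 1) := key
        _ ≤ α (m + 1) * δ m + ε (m + 1) := by
            have := mul_le_mul_of_nonneg_left (hδξ m) hαnn
            linarith
    refine max_le this ?_
    have : 0 ≤ α (m + 1) * δ m := mul_nonneg hαnn (hδ0 m)
    linarith [hε (m + 1)]
  -- unrolled bound with products
  have hunroll : ∀ k : ℕ,
      δ k ≤ ∑ n ∈ range (k + 1), (∏ j ∈ Icc (n + 1) k, α j) * ε n := by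
    intro k
    induction k with
    | zero => simpa using hbase
    | succ m ih =>
      calc δ (m + 1) ≤ α (m + 1) * δ m + ε (m + 1) := hstep m
        _ ≤ α (m + 1) * (∑ n ∈ range (m + 1), (∏ j ∈ Icc (n + 1) m, α j) * ε n)
              + ε (m + 1) :=
            add_le_add_left (mul_le_mul_of_nonneg_left ih (hα0 (m + 1) (by omega))) _
        _ = ∑ n ∈ range (m + 2), (∏ j ∈ Icc (n + 1) (m + 1), α j) * ε n := by
            rw [Finset.sum_range_succ (n := m + 1)]
            rw [Finset.mul_sum]
            congr 1
            · apply Finset.sum_congr rfl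
              intro n hn
              have hn' : n + 1 ≤ m + 1 := Finset.mem_range.mp hn
              rw [Finset.prod_Icc_succ_top hn']
              ring
            · rw [show Icc (m + 1 + 1) (m + 1) = (∅ : Finset ℕ) from
                Finset.Icc_eq_empty (by omega)]
              simp
  -- product ≤ exp ζ
  have hprodexp : ∀ n k : ℕ, n ≤ k → (∏ j ∈ Icc (n + 1) k, α j) ≤ Real.exp (ζ k n) := by
    intro n k hnk
    rcases eq_or_lt_of_le hnk with h | h
    · subst h
      rw [show Icc (n + 1) n = (∅ : Finset ℕ) from Finset.Icc_eq_empty (by omega)]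
      rw [hζ n n, if_pos le_rfl]
      simp
    · rw [hζ k n, if_neg (by omega), Real.exp_sum]
      apply Finset.prod_le_prod
      · intro j hj
        exact hα0 j (by have := (Finset.mem_Icc.mp hj).1; omega)
      · intro j hj
        have := Real.add_one_le_exp (μ j j - 2)
        simp only [hα]; linarith
  have hδbound : ∀ k : ℕ, δ k ≤ ∑ n ∈ range (k + 1), Real.exp (ζ k n) * ε n := by
    intro k
    refine (hunroll k).trans (Finset.sum_le_sum ?_)
    intro n hn
    have hnk : n ≤ k := by have := Finset.mem_range.mp hn; omega
    exact mul_le_mul_of_nonneg_right (hprodexp n k hnk) (hε n)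
  have hχ0 : ∀ n, 0 ≤ χ n := by
    intro n
    rw [hχ n]
    exact tsum_nonneg fun k => (Real.exp_pos _).le
  -- summability of δ
  have hδsum : Summable δ := by
    apply summable_of_sum_range_le hδ0
    intro K
    calc ∑ k ∈ range K, δ k
        ≤ ∑ k ∈ range K, ∑ n ∈ range (k + 1), Real.exp (ζ k n) * ε n :=
          Finset.sum_le_sum fun k _ => hδbound k
      _ = ∑ n ∈ range K, ∑ k ∈ Ico n K, Real.exp (ζ k n) * ε n := by
          refine Finset.sum_comm' ?_
          intro k n
          simp only [Finset.mem_range, Finset.mem_Ico]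
          omega
      _ ≤ ∑ n ∈ range K, χ n * ε n := by
          apply Finset.sum_le_sum
          intro n _
          rw [← Finset.sum_mul]
          apply mul_le_mul_of_nonneg_right _ (hε n)
          rw [Finset.sum_Ico_eq_sum_range, hχ n]
          exact Summable.sum_le_tsum (range (K - n)) (fun k _ => (Real.exp_pos _).le) (hχsum n)
      _ ≤ ∑' n, χ n * ε n :=
          Summable.sum_le_tsum (range K) (fun n _ => mul_nonneg (hχ0 n) (hε n)) hχε
  -- conclude convergence
  set S : ℕ → ℝ := fun n => ∑ i ∈ range n, δ i with hS
  set u : ℕ → ℝ := fun n => ξ n - S n with hu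
  have hanti : Antitone u := by
    apply antitone_nat_of_succ_le
    intro n
    have : S (n + 1) = S n + δ n := Finset.sum_range_succ δ n
    simp only [hu, this]
    have := hδξ n
    linarith
  have hbdd : BddBelow (Set.range u) := by
    refine ⟨-(∑' i, δ i), ?_⟩
    rintro x ⟨n, rfl⟩
    have h1 : S n ≤ ∑' i, δ i := Summable.sum_le_tsum (range n) (fun i _ => hδ0 i) hδsum
    have := hξ n
    simp only [hu]
    linarith
  have hul : Tendsto u atTop (nhds (⨅ n, u n)) := tendsto_atTop_ciInf hanti hbdd
  have hSl : Tendsto S atTop (nhds (∑' i, δ i)) := hδsum.hasSum.tendsto_sum_nat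
  refine ⟨(⨅ n, u n) + ∑' i, δ i, ?_⟩
  have : ξ = fun n => u n + S n := by
    funext n; simp [hu]
  rw [this]
  exact hul.add hSl
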